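/- Let M = {x_1, …, x_m} ⊂ ℝ^{n₀} be a finite set. Then for every function f : M → ℝ and every ε > 0 there exists a network function F ∈ NN_cos(1, 3), i.e. a function of the form F(x) = c · cos(u · cos(wᵀ x + b)) with w ∈ ℝ^{n₀} and u, b, c ∈ ℝ, such that max_{j=1,…,m} |f(x_j) − F(x_j)| < ε. -/

import Mathlib

noncomputable section

open Filter Finset Complex intervalIntegral Polynomial

private lemma my_avg_exp_tendsto {lam : ℝ} (hl : lam ≠ 0) :
    Tendsto (fun T : ℝ => (∫ u in (0:ℝ)..T, Complex.exp (lam * I * u)) / T) atTop (nhds 0) := by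
  have hc : (lam : ℂ) * I ≠ 0 := by
    simp [Complex.ext_iff, hl]
  have hI : ∀ T : ℝ, (∫ u in (0:ℝ)..T, Complex.exp ((lam : ℂ) * I * u))
      = (Complex.exp (lam * I * T) - Complex.exp (lam * I * 0)) / (lam * I) :=
    fun T => integral_exp_mul_complex hc
  have h1 : ∀ s : ℂ, s.im = 0 → ‖Complex.exp ((lam:ℂ) * I * s)‖ = 1 := by
    intro s hs
    rw [Complex.norm_exp]
    convert Real.exp_zero using 2
    simp [Complex.mul_re, Complex.mul_im, hs]
  have hbound : ∀ T : ℝ, 1 ≤ T →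
      ‖(∫ u in (0:ℝ)..T, Complex.exp ((lam : ℂ) * I * u)) / T‖ ≤ (2 / |lam|) / T := by
    intro T hT
    rw [hI, norm_div, norm_div]
    have h2 : ‖Complex.exp ((lam:ℂ) * I * T) - Complex.exp ((lam:ℂ) * I * 0)‖ ≤ 2 := by
      calc ‖Complex.exp ((lam:ℂ) * I * T) - Complex.exp ((lam:ℂ) * I * 0)‖
          ≤ ‖Complex.exp ((lam:ℂ) * I * T)‖ + ‖Complex.exp ((lam:ℂ) * I * 0)‖ := norm_sub_le _ _
        _ ≤ 2 := by rw [h1 T (by simp), h1 0 (by simp)]; norm_num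
    have h3 : ‖(lam : ℂ) * I‖ = |lam| := by
      simp [map_mul]
    rw [h3]
    have hT0 : (0:ℝ) < T := lt_of_lt_of_le one_pos hT
    have h4 : ‖(T:ℂ)‖ = T := by
      simp [abs_of_pos hT0]
    rw [h4]
    exact div_le_div_of_nonneg_right (div_le_div_of_nonneg_right h2 (abs_pos.mpr hl).le) hT0.le
  have hb0 : Tendsto (fun T : ℝ => (2 / |lam|) / T) atTop (nhds 0) :=
    Tendsto.div_atTop tendsto_const_nhds tendsto_id
  refine squeeze_zero_norm' ?_ hb0
  filter_upwards [eventually_ge_atTop (1:ℝ)] with T hT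
  exact hbound T hT

private lemma my_weyl {ι : Type*} [DecidableEq ι] (s : Finset ι) (lam : ι → ℝ) (c : ι → ℂ) :
    Tendsto (fun T : ℝ => (∫ u in (0:ℝ)..T, ∑ i ∈ s, c i * Complex.exp (lam i * I * u)) / T)
      atTop (nhds (∑ i ∈ s.filter (fun i => lam i = 0), c i)) := by
  have hint : ∀ (i : ι) (T : ℝ), IntervalIntegrable (fun u : ℝ => c i * Complex.exp (lam i * I * u))
      MeasureTheory.volume 0 T := by
    intro i T
    apply Continuous.intervalIntegrable
    exact continuous_const.mul (Complex.continuous_exp.comp (continuous_const.mul Complex.continuous_ofReal))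
  have key : ∀ T : ℝ, (∫ u in (0:ℝ)..T, ∑ i ∈ s, c i * Complex.exp (lam i * I * u)) / T
      = ∑ i ∈ s, (c i * ∫ u in (0:ℝ)..T, Complex.exp (lam i * I * u)) / T := by
    intro T
    rw [intervalIntegral.integral_finset_sum (fun i (_ : i ∈ s) => hint i T), ← Finset.sum_div]
    congr 1
    exact Finset.sum_congr rfl fun i _ => by rw [intervalIntegral.integral_const_mul]
  rw [show (∑ i ∈ s.filter (fun i => lam i = 0), c i) = ∑ i ∈ s, (if lam i = 0 then c i else 0) from
    (Finset.sum_filter _ _)]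
  refine Tendsto.congr (fun T => (key T).symm) (tendsto_finset_sum s fun i _ => ?_)
  by_cases hli : lam i = 0
  · rw [if_pos hli]
    have heq : ∀ T : ℝ, T ≠ 0 → (c i * ∫ u in (0:ℝ)..T, Complex.exp ((lam i : ℝ) * I * u)) / T = c i := by
      intro T hT
      have h0 : ((lam i : ℝ) : ℂ) = 0 := by rw [hli]; norm_num
      simp only [h0, zero_mul, Complex.exp_zero]
      rw [intervalIntegral.integral_const]
      simp only [sub_zero, Complex.real_smul, mul_one]
      exact mul_div_cancel_right₀ (c i) (Complex.ofReal_ne_zero.mpr hT)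
    refine Tendsto.congr' ?_ tendsto_const_nhds
    filter_upwards [eventually_ne_atTop (0:ℝ)] with T hT
    exact (heq T hT).symm
  · rw [if_neg hli]
    have := (my_avg_exp_tendsto hli).const_mul (c i)
    simpa [mul_div_assoc] using this

private lemma my_power_sums {ι : Type*} [Fintype ι] [DecidableEq ι] (y a : ι → ℝ)
    (hy : Function.Injective y)
    (h : ∀ p : ℕ, p < Fintype.card ι → ∑ j, a j * y j ^ p = 0) (i : ι) : a i = 0 := by
  set Q : Polynomial ℝ := ∏ j ∈ Finset.univ.erase i, (X - C (y j)) with hQ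
  have hdeg : Q.natDegree < Fintype.card ι := by
    have : Q.natDegree = (Finset.univ.erase i).card := by
      rw [hQ, Polynomial.natDegree_prod]
      · simp [Polynomial.natDegree_X_sub_C]
      · intro j _; exact Polynomial.X_sub_C_ne_zero (y j)
    rw [this, Finset.card_erase_of_mem (Finset.mem_univ i), Finset.card_univ]
    have := Fintype.card_pos_iff.mpr ⟨i⟩
    omega
  have hsum : ∑ j, a j * Q.eval (y j) = 0 := by
    have : ∀ j : ι, a j * Q.eval (y j)
        = ∑ p ∈ Finset.range (Fintype.card ι), Q.coeff p * (a j * y j ^ p) := by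
      intro j
      rw [Polynomial.eval_eq_sum_range' hdeg, Finset.mul_sum]
      exact Finset.sum_congr rfl fun p _ => by ring
    rw [Finset.sum_congr rfl fun j _ => this j, Finset.sum_comm]
    refine Finset.sum_eq_zero fun p hp => ?_
    rw [← Finset.mul_sum, h p (Finset.mem_range.mp hp), mul_zero]
  have heval : ∀ j : ι, j ≠ i → Q.eval (y j) = 0 := by
    intro j hj
    rw [hQ, Polynomial.eval_prod]
    exact Finset.prod_eq_zero (Finset.mem_erase.mpr ⟨hj, Finset.mem_univ j⟩) (by simp)
  have hQi : Q.eval (y i) ≠ 0 := by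
    rw [hQ, Polynomial.eval_prod]
    refine Finset.prod_ne_zero_iff.mpr fun j hj => ?_
    simp only [Polynomial.eval_sub, Polynomial.eval_X, Polynomial.eval_C]
    exact sub_ne_zero.mpr fun hyij => (Finset.mem_erase.mp hj).1 (hy hyij).symm
  have hsingle : ∑ j, a j * Q.eval (y j) = a i * Q.eval (y i) :=
    Finset.sum_eq_single i (fun j _ hj => by rw [heval j hj, mul_zero])
      (fun hi => absurd (Finset.mem_univ i) hi)
  have : a i * Q.eval (y i) = 0 := by rw [← hsingle]; exact hsum
  exact (mul_eq_zero.mp this).resolve_right hQi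

private lemma my_trig_vanish {ι : Type*} [Fintype ι] [DecidableEq ι] (d : ι → ℝ)
    (hd : Function.Injective d) (hpos : ∀ j, 0 < d j) (a : ι → ℝ) (s₀ r : ℝ) (hr : 0 < r)
    (h : ∀ s ∈ Metric.ball s₀ r, ∑ j, a j * Real.cos (d j * s) = 0) (i : ι) : a i = 0 := by
  set Cp : ℕ → ℝ → ℝ := fun p s => ∑ j, a j * d j ^ (2*p) * Real.cos (d j * s) with hCp
  set Sp : ℕ → ℝ → ℝ := fun p s => ∑ j, a j * d j ^ (2*p+1) * Real.sin (d j * s) with hSp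
  have hdC : ∀ (p : ℕ) (s : ℝ), HasDerivAt (Cp p) (-Sp p s) s := by
    intro p s
    have hX : HasDerivAt (Cp p) (∑ j, a j * d j ^ (2*p) * (-Real.sin (d j * s) * d j)) s := by
      refine HasDerivAt.fun_sum fun j _ => ?_
      have h1 : HasDerivAt (fun s : ℝ => d j * s) (d j) s := by
        simpa using (hasDerivAt_id s).const_mul (d j)
      exact ((Real.hasDerivAt_cos (d j * s)).comp s h1).const_mul _
    have hsum : (∑ j, a j * d j ^ (2*p) * (-Real.sin (d j * s) * d j)) = -Sp p s := by
      rw [hSp, ← Finset.sum_neg_distrib]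
      exact Finset.sum_congr rfl fun j _ => by ring
    exact hsum ▸ hX
  have hdS : ∀ (p : ℕ) (s : ℝ), HasDerivAt (Sp p) (Cp (p+1) s) s := by
    intro p s
    have hX : HasDerivAt (Sp p) (∑ j, a j * d j ^ (2*p+1) * (Real.cos (d j * s) * d j)) s := by
      refine HasDerivAt.fun_sum fun j _ => ?_
      have h1 : HasDerivAt (fun s : ℝ => d j * s) (d j) s := by
        simpa using (hasDerivAt_id s).const_mul (d j)
      exact ((Real.hasDerivAt_sin (d j * s)).comp s h1).const_mul _
    have hsum : (∑ j, a j * d j ^ (2*p+1) * (Real.cos (d j * s) * d j)) = Cp (p+1) s := by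
      rw [hCp]
      exact Finset.sum_congr rfl fun j _ => by ring
    exact hsum ▸ hX
  -- derivative of a function vanishing on the ball vanishes on the ball
  have deriv_zero : ∀ (g : ℝ → ℝ) (g' : ℝ → ℝ), (∀ s, HasDerivAt g (g' s) s) →
      (∀ s ∈ Metric.ball s₀ r, g s = 0) → ∀ s ∈ Metric.ball s₀ r, g' s = 0 := by
    intro g g' hg hg0 s hs
    have heq : g =ᶠ[nhds s] (fun _ => (0:ℝ)) :=
      Filter.eventuallyEq_of_mem (Metric.isOpen_ball.mem_nhds hs) hg0
    have h1 : HasDerivAt g 0 s := (heq.hasDerivAt_iff).mpr (hasDerivAt_const s 0)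
    exact (hg s).unique h1
  have main : ∀ p : ℕ, (∀ s ∈ Metric.ball s₀ r, Cp p s = 0) ∧
      (∀ s ∈ Metric.ball s₀ r, Sp p s = 0) := by
    intro p
    induction p with
    | zero =>
      have hC0 : ∀ s ∈ Metric.ball s₀ r, Cp 0 s = 0 := by
        intro s hs
        rw [hCp]
        simpa using h s hs
      refine ⟨hC0, fun s hs => ?_⟩
      have h2 : -(Sp 0 s) = 0 := deriv_zero (Cp 0) (fun s => -Sp 0 s) (hdC 0) hC0 s hs
      linarith
    | succ p ih =>
      have hC : ∀ s ∈ Metric.ball s₀ r, Cp (p+1) s = 0 := fun s hs =>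
        deriv_zero (Sp p) (Cp (p+1)) (hdS p) ih.2 s hs
      refine ⟨hC, fun s hs => ?_⟩
      have h2 : -(Sp (p+1) s) = 0 := deriv_zero (Cp (p+1)) (fun s => -Sp (p+1) s) (hdC (p+1)) hC s hs
      linarith
  have hs₀ : s₀ ∈ Metric.ball s₀ r := Metric.mem_ball_self hr
  have hy : Function.Injective (fun j => d j ^ 2) := by
    intro j j' hjj'
    simp only [sq] at hjj'
    rcases mul_self_eq_mul_self_iff.mp hjj' with h1 | h1
    · exact hd h1
    · exact absurd h1 (by nlinarith [hpos j, hpos j'])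
  have hcos : a i * Real.cos (d i * s₀) = 0 := by
    refine my_power_sums (fun j => d j ^ 2) (fun j => a j * Real.cos (d j * s₀)) hy ?_ i
    intro p hp
    have := (main p).1 s₀ hs₀
    rw [hCp] at this
    rw [← this]
    exact Finset.sum_congr rfl fun j _ => by rw [← pow_mul]; ring
  have hsin : a i * (d i * Real.sin (d i * s₀)) = 0 := by
    refine my_power_sums (fun j => d j ^ 2) (fun j => a j * (d j * Real.sin (d j * s₀))) hy ?_ i
    intro p hp
    have := (main p).2 s₀ hs₀
    rw [hSp] at this
    rw [← this]
    refine Finset.sum_congr rfl fun j _ => ?_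
    rw [← pow_mul]
    rw [pow_succ' (d j) (2*p)] -- might not be the right form; fix below
    ring
  have hsin' : a i * Real.sin (d i * s₀) = 0 := by
    rcases mul_eq_zero.mp hsin with h1 | h1
    · rw [h1, zero_mul]
    · rcases mul_eq_zero.mp h1 with h2 | h2
      · exact absurd h2 (ne_of_gt (hpos i))
      · rw [h2, mul_zero]
  linear_combination Real.sin (d i * s₀) * hsin' + Real.cos (d i * s₀) * hcos
    - a i * (Real.sin_sq_add_cos_sq (d i * s₀))

private lemma my_exists_good_s {ι : Type*} [Fintype ι] [DecidableEq ι] (d : ι → ℝ)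
    (hd : Function.Injective d) (hpos : ∀ j, 0 < d j) (F : Finset (ι → ℤ))
    (hF : (0 : ι → ℤ) ∉ F) :
    ∃ s : ℝ, ∀ n ∈ F, (∑ j, (n j : ℝ) * Real.cos (d j * s)) ≠ 0 := by
  by_contra hcon
  push_neg at hcon
  have hcover : (⋃ n : {n // n ∈ F}, {s : ℝ | ∑ j, ((n.1 j : ℝ)) * Real.cos (d j * s) = 0})
      = Set.univ := by
    ext s
    simp only [Set.mem_iUnion, Set.mem_univ, iff_true, Set.mem_setOf_eq]
    obtain ⟨n, hnF, hn0⟩ := hcon s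
    exact ⟨⟨n, hnF⟩, hn0⟩
  have hclosed : ∀ n : {n // n ∈ F},
      IsClosed {s : ℝ | ∑ j, ((n.1 j : ℝ)) * Real.cos (d j * s) = 0} := by
    intro n
    refine isClosed_eq ?_ continuous_const
    exact continuous_finset_sum _ fun j _ =>
      continuous_const.mul (Real.continuous_cos.comp (continuous_const.mul continuous_id))
  obtain ⟨n, hne⟩ := nonempty_interior_of_iUnion_of_closed hclosed hcover
  obtain ⟨s₀, hs₀⟩ := hne
  have hnhds := mem_interior_iff_mem_nhds.mp hs₀
  obtain ⟨r, hr, hball⟩ := Metric.mem_nhds_iff.mp hnhds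
  have hzero : ∀ i : ι, ((n.1 i : ℝ)) = 0 := by
    intro i
    exact my_trig_vanish d hd hpos (fun j => (n.1 j : ℝ)) s₀ r hr
      (fun s hs => hball hs) i
  have : n.1 = 0 := funext fun i => by have := hzero i; exact_mod_cast this
  exact hF (this ▸ n.2)

private lemma my_abs_sin_le (z : ℝ) : |Real.sin z| ≤ |z| := by
  have key : ∀ w : ℝ, 0 ≤ w → |Real.sin w| ≤ w := by
    intro w hw
    rcases le_or_gt w 1 with h1 | h1
    · rw [_root_.abs_of_nonneg (Real.sin_nonneg_of_nonneg_of_le_pi hw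
        (h1.trans (by linarith [Real.pi_gt_three])))]
      exact Real.sin_le hw
    · exact (Real.abs_sin_le_one w).trans h1.le
  rcases le_or_gt 0 z with hz | hz
  · rw [_root_.abs_of_nonneg hz]; exact key z hz
  · rw [_root_.abs_of_neg hz, ← abs_neg, ← Real.sin_neg]
    exact key (-z) (by linarith)

private lemma my_abs_cos_sub_cos (x y : ℝ) : |Real.cos x - Real.cos y| ≤ |x - y| := by
  rw [Real.cos_sub_cos]
  have b1 : |Real.sin ((x+y)/2)| * |Real.sin ((x-y)/2)| ≤ 1 * |(x-y)/2| :=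
    mul_le_mul (Real.abs_sin_le_one _) (my_abs_sin_le _) (abs_nonneg _) zero_le_one
  calc |-2 * Real.sin ((x+y)/2) * Real.sin ((x-y)/2)|
      = 2 * (|Real.sin ((x+y)/2)| * |Real.sin ((x-y)/2)|) := by
        rw [abs_mul, abs_mul]
        norm_num
        ring
    _ ≤ 2 * (1 * |(x-y)/2|) := by linarith
    _ = |x - y| := by rw [abs_div, _root_.abs_two]; ring

private lemma my_cos_factor (k : ℕ) (α : ℝ) :
    ((((1 + Real.cos α) / 2 : ℝ) : ℂ)) ^ k
      = ∑ r ∈ Finset.range (2*k+1),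
          (((2*k).choose r : ℂ) / 4 ^ k) * Complex.exp ((((r:ℝ) - k : ℝ) : ℂ) * I * α) := by
  set z : ℂ := Complex.exp (α * I) with hzdef
  have hz : z ≠ 0 := Complex.exp_ne_zero _
  have hzinv : z⁻¹ = Complex.exp (-(α * I)) := by rw [Complex.exp_neg]
  have h1 : z + z⁻¹ = 2 * Complex.cos α := by
    rw [hzinv, hzdef, Complex.exp_mul_I, show -((α:ℂ) * I) = ((-α : ℝ):ℂ) * I by push_cast; ring,
      Complex.exp_mul_I]
    push_cast
    rw [Complex.cos_neg, Complex.sin_neg]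
    ring
  have h2 : (((1 + Real.cos α)/2 : ℝ) : ℂ) = (2 + z + z⁻¹)/4 := by
    push_cast [Complex.ofReal_cos]
    linear_combination (-1/4 : ℂ) * h1
  have h3 : (2:ℂ) + z + z⁻¹ = z⁻¹ * (z + 1)^2 := by
    field_simp
    ring
  have hexp : ∀ r : ℕ, z ^ r * (z⁻¹) ^ k = Complex.exp ((((r:ℝ) - k : ℝ) : ℂ) * I * α) := by
    intro r
    rw [hzinv, hzdef, ← Complex.exp_nat_mul, ← Complex.exp_nat_mul, ← Complex.exp_add]
    congr 1
    push_cast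
    ring
  rw [h2, h3]
  rw [div_pow, mul_pow, ← pow_mul, add_pow]
  rw [Finset.mul_sum, Finset.sum_div]
  refine Finset.sum_congr rfl fun r hr => ?_
  rw [one_pow, ← hexp r]
  ring

private lemma my_kronecker {ι : Type*} [Fintype ι] [DecidableEq ι] (t θ : ι → ℝ) (δ : ℝ)
    (hδ0 : 0 < δ) (hδπ : δ ≤ Real.pi) (k : ℕ)
    (hk : ((1 + Real.cos δ) / 2) ^ k * (2 * (k:ℝ) + 1) ^ (Fintype.card ι) < 1)
    (hrel : ∀ n : ι → ℤ, (∀ j, |n j| ≤ 2 * k) → (∑ j, (n j : ℝ) * t j) = 0 → n = 0) :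
    ∃ u : ℝ, ∀ j, |Real.cos (u * t j) - Real.cos (θ j)| < δ := by
  classical
  have hk1 : 1 ≤ k := by
    by_contra hcon
    push_neg at hcon
    interval_cases k
    norm_num at hk
  set ρ : ℝ := (1 + Real.cos δ) / 2 with hρdef
  have hρ0 : 0 ≤ ρ := by
    have := Real.neg_one_le_cos δ
    rw [hρdef]; linarith
  set K : ℝ → ℝ := fun u => ∏ j, ((1 + Real.cos (u * t j - θ j)) / 2) ^ k with hKdef
  set piF : Finset (ι → ℕ) := Fintype.piFinset (fun _ : ι => Finset.range (2*k+1)) with hpiF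
  set lam : (ι → ℕ) → ℝ := fun r => ∑ j, ((r j : ℝ) - k) * t j with hlam
  set co : (ι → ℕ) → ℂ := fun r =>
    (∏ j, (((2*k).choose (r j) : ℂ) / 4 ^ k)) *
      Complex.exp (((-∑ j, ((r j : ℝ) - k) * θ j : ℝ) : ℂ) * I) with hco
  have hKE : ∀ u : ℝ, ((K u : ℝ) : ℂ)
      = ∑ r ∈ piF, co r * Complex.exp (((lam r : ℝ):ℂ) * I * (u:ℝ)) := by
    intro u
    simp only [hKdef]
    calc (((∏ j, ((1 + Real.cos (u * t j - θ j)) / 2) ^ k : ℝ)) : ℂ)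
        = ∏ j, ((((1 + Real.cos (u * t j - θ j)) / 2 : ℝ):ℂ)) ^ k := by
          rw [Complex.ofReal_prod]
          exact Finset.prod_congr rfl fun j _ => Complex.ofReal_pow _ _
      _ = ∏ j, ∑ r ∈ Finset.range (2*k+1),
            (((2*k).choose r : ℂ) / 4 ^ k) *
              Complex.exp ((((r:ℝ) - k : ℝ) : ℂ) * I * ((u * t j - θ j : ℝ):ℂ)) := by
          exact Finset.prod_congr rfl fun j _ => my_cos_factor k (u * t j - θ j)
      _ = ∑ r ∈ piF, ∏ j, ((((2*k).choose (r j) : ℂ) / 4 ^ k) *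
              Complex.exp ((((r j:ℝ) - k : ℝ) : ℂ) * I * ((u * t j - θ j : ℝ):ℂ))) := by
          rw [hpiF, Finset.prod_univ_sum]
      _ = ∑ r ∈ piF, co r * Complex.exp (((lam r : ℝ):ℂ) * I * (u:ℝ)) := by
          refine Finset.sum_congr rfl fun r _ => ?_
          rw [Finset.prod_mul_distrib, ← Complex.exp_sum]
          have hsum : (∑ j, ((((r j:ℝ) - k : ℝ) : ℂ) * I * ((u * t j - θ j : ℝ):ℂ)))
              = ((lam r : ℝ):ℂ) * I * (u:ℝ) + ((-∑ j, ((r j : ℝ) - k) * θ j : ℝ) : ℂ) * I := by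
            have hterm : ∀ j : ι, (((r j:ℝ) - k : ℝ) : ℂ) * I * ((u * t j - θ j : ℝ):ℂ)
                = ((((r j:ℝ) - k) * t j : ℝ) : ℂ) * (I * (u:ℂ))
                  + ((-(((r j:ℝ) - k) * θ j) : ℝ) : ℂ) * I := by
              intro j; push_cast; ring
            simp only [hlam]
            rw [Finset.sum_congr rfl fun j _ => hterm j, Finset.sum_add_distrib,
              ← Finset.sum_mul, ← Finset.sum_mul, ← Complex.ofReal_sum, ← Complex.ofReal_sum,
              Finset.sum_neg_distrib]
            push_cast
            ring
          rw [hsum, Complex.exp_add, hco]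
          ring
  have hconstmem : (fun _ : ι => k) ∈ piF := by
    rw [hpiF, Fintype.mem_piFinset]
    intro j
    rw [Finset.mem_range]
    omega
  have hfilter : piF.filter (fun r => lam r = 0) = {fun _ : ι => k} := by
    ext r
    simp only [Finset.mem_filter, Finset.mem_singleton]
    constructor
    · rintro ⟨hmem, hlam0⟩
      have hbd : ∀ j, r j ≤ 2 * k := by
        intro j
        have := Fintype.mem_piFinset.mp hmem j
        rw [Finset.mem_range] at this
        omega
      set n : ι → ℤ := fun j => (r j : ℤ) - k with hn
      have h1 : ∀ j, |n j| ≤ 2 * k := by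
        intro j
        have := hbd j
        rw [hn, abs_le]
        constructor
        · simp only []
          omega
        · simp only []
          omega
      have h2 : (∑ j, ((n j : ℝ)) * t j) = 0 := by
        rw [← hlam0, hlam]
        refine Finset.sum_congr rfl fun j _ => ?_
        rw [hn]
        push_cast
        ring
      have h3 := hrel n h1 h2
      funext j
      have h4 : n j = 0 := by rw [h3]; rfl
      rw [hn] at h4
      simp only [] at h4
      omega
    · intro h
      subst h
      refine ⟨hconstmem, ?_⟩
      rw [hlam]
      simp
  set A : ℝ := (((2*k).choose k : ℝ) / 4 ^ k) ^ (Fintype.card ι) with hA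
  have hWR : Tendsto (fun T : ℝ => (∫ u in (0:ℝ)..T, K u) / T) atTop (nhds A) := by
    have hW := my_weyl piF lam co
    rw [hfilter, Finset.sum_singleton] at hW
    have heqfun : ∀ T : ℝ, (∫ u in (0:ℝ)..T,
          ∑ r ∈ piF, co r * Complex.exp (((lam r : ℝ):ℂ) * I * (u:ℝ))) / (T:ℂ)
        = (((∫ u in (0:ℝ)..T, K u) / T : ℝ) : ℂ) := by
      intro T
      have h1 : (∫ u in (0:ℝ)..T, ∑ r ∈ piF, co r * Complex.exp (((lam r : ℝ):ℂ) * I * (u:ℝ)))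
          = ∫ u in (0:ℝ)..T, ((K u : ℝ):ℂ) :=
        intervalIntegral.integral_congr (fun u _ => (hKE u).symm)
      rw [h1, intervalIntegral.integral_ofReal, Complex.ofReal_div]
    have hlimeq : co (fun _ : ι => k) = ((A:ℝ):ℂ) := by
      have e1 : (∑ j : ι, (((k:ℕ):ℝ) - ((k:ℕ):ℝ)) * θ j) = 0 := by simp
      simp only [hco]
      rw [e1]
      rw [Finset.prod_const, Finset.card_univ, hA]
      push_cast
      ring_nf
      simp [Complex.exp_zero]
    rw [hlimeq] at hW
    have hW2 := Tendsto.congr heqfun hW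
    have hre := (Complex.continuous_re.tendsto _).comp hW2
    simpa only [Function.comp_def, Complex.ofReal_re] using hre
  have hAlow : ((2 * (k:ℝ) + 1))⁻¹ ^ (Fintype.card ι) ≤ A := by
    rw [hA]
    have hchoosepos : (0:ℝ) < ((2*k).choose k : ℝ) := by
      exact_mod_cast Nat.choose_pos (show k ≤ 2*k by omega)
    have h4 : (4:ℝ) ^ k ≤ (2 * (k:ℝ) + 1) * ((2*k).choose k : ℝ) := by
      have hnat := Nat.four_pow_le_two_mul_self_mul_centralBinom k hk1
      have hcb : Nat.centralBinom k = (2*k).choose k := rfl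
      rw [hcb] at hnat
      calc (4:ℝ) ^ k ≤ ((2 * k * ((2*k).choose k) : ℕ) : ℝ) := by exact_mod_cast hnat
        _ ≤ (2 * (k:ℝ) + 1) * ((2*k).choose k : ℝ) := by push_cast; nlinarith
    refine pow_le_pow_left₀ (by positivity) ?_ _
    rw [inv_eq_one_div, div_le_div_iff₀ (by positivity) (by positivity)]
    calc 1 * (4:ℝ)^k = 4^k := one_mul _
      _ ≤ (2 * (k:ℝ) + 1) * ((2*k).choose k : ℝ) := h4
      _ = ((2*k).choose k : ℝ) * (2 * (k:ℝ) + 1) := mul_comm _ _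
  have hP : (0:ℝ) < (2*(k:ℝ)+1)^(Fintype.card ι) := by positivity
  have hρA : ρ ^ k < A := by
    have h1 : ρ^k < 1 / ((2*(k:ℝ)+1)^(Fintype.card ι)) := (lt_div_iff₀ hP).mpr hk
    calc ρ^k < 1 / ((2*(k:ℝ)+1)^(Fintype.card ι)) := h1
      _ = ((2*(k:ℝ)+1))⁻¹ ^ (Fintype.card ι) := by rw [one_div, inv_pow]
      _ ≤ A := hAlow
  have hfac01 : ∀ x : ℝ, 0 ≤ (1 + Real.cos x)/2 ∧ (1 + Real.cos x)/2 ≤ 1 := by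
    intro x
    constructor
    · linarith [Real.neg_one_le_cos x]
    · linarith [Real.cos_le_one x]
  have hKcont : Continuous K := by
    rw [hKdef]
    refine continuous_finset_prod _ fun j _ => ?_
    exact ((continuous_const.add (Real.continuous_cos.comp
      ((continuous_id.mul continuous_const).sub continuous_const))).div_const 2).pow k
  have hKfac : ∀ (u : ℝ) (j : ι), K u ≤ ((1 + Real.cos (u * t j - θ j))/2)^k := by
    intro u j
    simp only [hKdef]
    rw [← Finset.mul_prod_erase Finset.univ _ (Finset.mem_univ j)]
    have h1 : (∏ i ∈ Finset.univ.erase j, ((1 + Real.cos (u * t i - θ i))/2)^k) ≤ 1 :=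
      Finset.prod_le_one (fun i _ => pow_nonneg (hfac01 _).1 k)
        (fun i _ => pow_le_one₀ (hfac01 _).1 (hfac01 _).2)
    exact mul_le_of_le_one_right (pow_nonneg (hfac01 _).1 k) h1
  obtain ⟨T, hT1, hTgt⟩ : ∃ T : ℝ, 1 ≤ T ∧ ρ^k < (∫ u in (0:ℝ)..T, K u)/T := by
    have h1 := hWR.eventually (eventually_gt_nhds hρA)
    obtain ⟨T, hT⟩ := (h1.and (eventually_ge_atTop (1:ℝ))).exists
    exact ⟨T, hT.2, hT.1⟩
  have hT0 : (0:ℝ) < T := lt_of_lt_of_le one_pos hT1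
  obtain ⟨u, hu⟩ : ∃ u : ℝ, ρ^k < K u := by
    by_contra hcon
    push_neg at hcon
    have hle : (∫ u in (0:ℝ)..T, K u) ≤ ∫ u in (0:ℝ)..T, ρ^k :=
      intervalIntegral.integral_mono_on hT0.le (hKcont.intervalIntegrable _ _)
        intervalIntegrable_const (fun x _ => hcon x)
    rw [intervalIntegral.integral_const, smul_eq_mul, sub_zero] at hle
    have h2 : (∫ u in (0:ℝ)..T, K u)/T ≤ ρ^k := by
      rw [div_le_iff₀ hT0]
      linarith
    linarith
  refine ⟨u, fun j => ?_⟩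
  have hfj : ρ^k < ((1 + Real.cos (u * t j - θ j))/2)^k := lt_of_lt_of_le hu (hKfac u j)
  have hbase : ρ < (1 + Real.cos (u * t j - θ j))/2 := by
    by_contra hcon
    push_neg at hcon
    exact absurd hfj (not_lt.mpr (pow_le_pow_left₀ (hfac01 _).1 hcon k))
  have hcosgt : Real.cos δ < Real.cos (u * t j - θ j) := by
    rw [hρdef] at hbase
    linarith
  set α : ℝ := u * t j - θ j with hα
  set n : ℤ := round (α / (2 * Real.pi)) with hn
  set β : ℝ := α - n * (2 * Real.pi) with hβ
  have hπ : (0:ℝ) < 2 * Real.pi := by linarith [Real.pi_pos]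
  have hβπ : |β| ≤ Real.pi := by
    have h1 := abs_sub_round (α / (2 * Real.pi))
    have h2 : β = (α / (2*Real.pi) - n) * (2*Real.pi) := by
      rw [hβ]
      field_simp
    rw [h2, abs_mul, _root_.abs_of_pos hπ]
    calc |α/(2*Real.pi) - n| * (2*Real.pi) ≤ (1/2) * (2*Real.pi) :=
        mul_le_mul_of_nonneg_right h1 hπ.le
      _ = Real.pi := by ring
  have hcosβ : Real.cos β = Real.cos α := by
    rw [hβ]
    exact Real.cos_sub_int_mul_two_pi α n
  have hβδ : |β| < δ := by
    by_contra hcon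
    push_neg at hcon
    have h1 : Real.cos |β| ≤ Real.cos δ := by
      rcases eq_or_lt_of_le hcon with he | hlt
      · rw [← he]
      · exact (Real.cos_lt_cos_of_nonneg_of_le_pi hδ0.le hβπ hlt).le
    rw [Real.cos_abs, hcosβ] at h1
    linarith
  have hut : u * t j = (θ j + β) + n * (2 * Real.pi) := by
    rw [hβ, hα]
    ring
  rw [hut, Real.cos_add_int_mul_two_pi]
  calc |Real.cos (θ j + β) - Real.cos (θ j)| ≤ |θ j + β - θ j| := my_abs_cos_sub_cos _ _
    _ = |β| := by ring_nf
    _ < δ := hβδ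

private lemma my_exists_sep (n₀ : ℕ) (V : Finset (Fin n₀ → ℝ)) (hV : ∀ v ∈ V, v ≠ 0) :
    ∃ w : Fin n₀ → ℝ, ∀ v ∈ V, dotProduct w v ≠ 0 := by
  classical
  induction V using Finset.induction_on with
  | empty => exact ⟨0, fun v hv => absurd hv (Finset.notMem_empty v)⟩
  | @insert a V ha ih =>
    obtain ⟨w, hw⟩ := ih (fun v hv => hV v (Finset.mem_insert_of_mem hv))
    have haa : dotProduct a a ≠ 0 := fun h =>
      (hV a (Finset.mem_insert_self a V)) (dotProduct_self_eq_zero.mp h)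
    set bad : Finset ℝ := ((insert a V).filter (fun v => dotProduct a v ≠ 0)).image
      (fun v => -(dotProduct w v)/(dotProduct a v)) with hbad
    obtain ⟨c, hc⟩ := Infinite.exists_notMem_finset bad
    refine ⟨w + c • a, fun v hv => ?_⟩
    have hdot : dotProduct (w + c • a) v
        = dotProduct w v + c * dotProduct a v := by
      rw [add_dotProduct, smul_dotProduct, smul_eq_mul]
    rw [hdot]
    by_cases hav : dotProduct a v = 0
    · have hvV : v ∈ V := by
        rcases Finset.mem_insert.mp hv with h | h
        · exact absurd (h ▸ hav) haa
        · exact h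
      rw [hav, mul_zero, add_zero]
      exact hw v hvV
    · intro heq
      apply hc
      rw [hbad]
      refine Finset.mem_image.mpr ⟨v, Finset.mem_filter.mpr ⟨hv, hav⟩, ?_⟩
      field_simp
      linarith [heq]

/-- Any function on a finite set `M ⊂ ℝ^{n₀}` can be approximated with
arbitrary accuracy by three-layer cosine networks of width one, i.e. functions of the
form `F x = c * cos (u * cos (wᵀ x + b))`. -/
theorem universal_approx_finite_set_cosine_width_one
    (n₀ : ℕ) (M : Finset (Fin n₀ → ℝ)) (f : (Fin n₀ → ℝ) → ℝ)
    (ε : ℝ) (hε : 0 < ε) :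
    ∃ (w : Fin n₀ → ℝ) (u b c : ℝ),
      ∀ x ∈ M, |f x - c * Real.cos (u * Real.cos (dotProduct w x + b))| < ε := by
  classical
  set c₀ : ℝ := 1 + ∑ x ∈ M, |f x| with hc₀
  have hsumnn : 0 ≤ ∑ x ∈ M, |f x| := Finset.sum_nonneg fun x _ => abs_nonneg _
  have hc₀pos : 0 < c₀ := by rw [hc₀]; linarith
  have hfc : ∀ x ∈ M, |f x| < c₀ := by
    intro x hx
    have h1 : |f x| ≤ ∑ y ∈ M, |f y| := Finset.single_le_sum (fun y _ => abs_nonneg (f y)) hx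
    rw [hc₀]; linarith
  set δ : ℝ := min (ε / (2 * c₀)) Real.pi with hδ
  have hδ0 : 0 < δ := lt_min (by positivity) Real.pi_pos
  have hδπ : δ ≤ Real.pi := min_le_right _ _
  set ρ : ℝ := (1 + Real.cos δ) / 2 with hρ
  have hρ1 : ρ < 1 := by
    have h1 : Real.cos δ < 1 := by
      calc Real.cos δ < Real.cos 0 := Real.cos_lt_cos_of_nonneg_of_le_pi (le_refl 0) hδπ hδ0
        _ = 1 := Real.cos_zero
    rw [hρ]; linarith
  have hρ0 : 0 ≤ ρ := by
    have := Real.neg_one_le_cos δ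
    rw [hρ]; linarith
  set m : ℕ := Fintype.card {x // x ∈ M} with hm
  obtain ⟨k, hk1, hk⟩ : ∃ k : ℕ, 1 ≤ k ∧ ρ^k * (2*(k:ℝ)+1)^m < 1 := by
    have h1 : Tendsto (fun k : ℕ => ((k:ℝ))^m * ρ^k) atTop (nhds 0) :=
      (summable_pow_mul_geometric_of_norm_lt_one (R := ℝ) m
        (by rwa [Real.norm_eq_abs, _root_.abs_of_nonneg hρ0])).tendsto_atTop_zero
    have h2 : Tendsto (fun k : ℕ => (3:ℝ)^m * (((k:ℝ))^m * ρ^k)) atTop (nhds 0) := by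
      simpa using h1.const_mul ((3:ℝ)^m)
    have h3 := h2.eventually (gt_mem_nhds one_pos)
    obtain ⟨k, hk'⟩ := (h3.and (eventually_ge_atTop 1)).exists
    refine ⟨k, hk'.2, ?_⟩
    have hkk : (1:ℝ) ≤ (k:ℝ) := by exact_mod_cast hk'.2
    have hb : (2*(k:ℝ)+1)^m ≤ (3:ℝ)^m * (k:ℝ)^m := by
      rw [← mul_pow]
      exact pow_le_pow_left₀ (by linarith) (by linarith) m
    calc ρ^k * (2*(k:ℝ)+1)^m ≤ ρ^k * ((3:ℝ)^m * (k:ℝ)^m) :=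
        mul_le_mul_of_nonneg_left hb (pow_nonneg hρ0 k)
      _ = (3:ℝ)^m * ((k:ℝ)^m * ρ^k) := by ring
      _ < 1 := hk'.1
  set V : Finset (Fin n₀ → ℝ) := ((M ×ˢ M).filter (fun p => p.1 ≠ p.2)).image (fun p => p.1 - p.2)
    with hVdef
  have hV : ∀ v ∈ V, v ≠ 0 := by
    intro v hv
    obtain ⟨p, hp, hpv⟩ := Finset.mem_image.mp hv
    have h2 := (Finset.mem_filter.mp hp).2
    rw [← hpv]
    exact sub_ne_zero.mpr h2
  obtain ⟨w₀, hw₀⟩ := my_exists_sep n₀ V hV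
  have hw₀inj : ∀ x ∈ M, ∀ y ∈ M, x ≠ y → dotProduct w₀ x ≠ dotProduct w₀ y := by
    intro x hx y hy hxy heq
    have hv : x - y ∈ V := Finset.mem_image.mpr
      ⟨(x,y), Finset.mem_filter.mpr ⟨Finset.mem_product.mpr ⟨hx, hy⟩, hxy⟩, rfl⟩
    have h2 := hw₀ _ hv
    rw [dotProduct_sub] at h2
    exact h2 (by rw [heq]; ring)
  set b₀ : ℝ := 1 + ∑ x ∈ M, |dotProduct w₀ x| with hb₀
  set d : {x // x ∈ M} → ℝ := fun x => dotProduct w₀ x.1 + b₀ with hd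
  have hdpos : ∀ x, 0 < d x := by
    intro x
    have h1 : |dotProduct w₀ x.1| ≤ ∑ y ∈ M, |dotProduct w₀ y| :=
      Finset.single_le_sum (f := fun y => |dotProduct w₀ y|) (fun y _ => abs_nonneg _) x.2
    have h2 := neg_abs_le (dotProduct w₀ x.1)
    rw [hd, hb₀]
    simp only []
    linarith
  have hdinj : Function.Injective d := by
    intro x y hxy
    simp only [hd] at hxy
    have h1 : dotProduct w₀ x.1 = dotProduct w₀ y.1 := by linarith
    by_contra hne
    exact hw₀inj x.1 x.2 y.1 y.2 (fun h => hne (Subtype.ext h)) h1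
  set F : Finset ({x // x ∈ M} → ℤ) :=
    (Fintype.piFinset (fun _ => Finset.Icc (-(2*(k:ℤ))) (2*(k:ℤ)))).erase 0 with hFdef
  have hF0 : (0 : {x // x ∈ M} → ℤ) ∉ F := Finset.notMem_erase _ _
  obtain ⟨s, hs⟩ := my_exists_good_s d hdinj hdpos F hF0
  set t : {x // x ∈ M} → ℝ := fun x => Real.cos (d x * s) with ht
  set θ : {x // x ∈ M} → ℝ := fun x => Real.arccos (f x.1 / c₀) with hθ
  have hz1 : ∀ x : {x // x ∈ M}, -1 ≤ f x.1 / c₀ ∧ f x.1 / c₀ ≤ 1 := by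
    intro x
    have h0 := abs_lt.mp (hfc x.1 x.2)
    constructor
    · rw [le_div_iff₀ hc₀pos]; linarith [h0.1]
    · rw [div_le_one hc₀pos]; linarith [h0.2]
  have hrel : ∀ n : {x // x ∈ M} → ℤ, (∀ j, |n j| ≤ 2 * k) → (∑ j, (n j : ℝ) * t j) = 0 →
      n = 0 := by
    intro n hn hsum
    by_contra hne
    have hmem : n ∈ F := by
      rw [hFdef]
      refine Finset.mem_erase.mpr ⟨hne, ?_⟩
      rw [Fintype.mem_piFinset]
      intro j
      rw [Finset.mem_Icc]
      have h2 := abs_le.mp (hn j)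
      omega
    exact hs n hmem (by rw [← hsum])
  obtain ⟨u, hu⟩ := my_kronecker t θ δ hδ0 hδπ k (by rw [← hm]; exact hk) hrel
  refine ⟨s • w₀, u, s * b₀, c₀, ?_⟩
  intro x hx
  set xs : {x // x ∈ M} := ⟨x, hx⟩ with hxs
  have harg : dotProduct (s • w₀) x + s * b₀ = d xs * s := by
    rw [smul_dotProduct, hd]
    simp only [smul_eq_mul]
    ring
  rw [harg]
  have hcosθ : Real.cos (θ xs) = f x / c₀ := Real.cos_arccos (hz1 xs).1 (hz1 xs).2
  have hclose := hu xs
  have htx : Real.cos (d xs * s) = t xs := rfl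
  rw [htx]
  have key : |f x - c₀ * Real.cos (u * t xs)| = c₀ * |Real.cos (u * t xs) - Real.cos (θ xs)| := by
    have e1 : f x - c₀ * Real.cos (u * t xs) = c₀ * (Real.cos (θ xs) - Real.cos (u * t xs)) := by
      rw [hcosθ]
      field_simp
    rw [e1, abs_mul, _root_.abs_of_pos hc₀pos, abs_sub_comm]
  rw [key]
  have hend : c₀ * δ < ε := by
    have h1 : δ ≤ ε / (2 * c₀) := min_le_left _ _
    have h2 : c₀ * δ ≤ c₀ * (ε / (2 * c₀)) := mul_le_mul_of_nonneg_left h1 hc₀pos.le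
    have h3 : c₀ * (ε / (2 * c₀)) = ε / 2 := by field_simp
    nlinarith [h2, h3, hε]
  calc c₀ * |Real.cos (u * t xs) - Real.cos (θ xs)| < c₀ * δ :=
      mul_lt_mul_of_pos_left hclose hc₀pos
    _ < ε := hend
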